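/- For every r ∈ (0,1) and every ρ > 0, there exists a constant C ≥ 0 such that 0 ≤ H_{r,ρ}(x) ≤ C · exp(−ρ x²/2) for all x ≥ 0. Consequently, for every ε with 0 < ε < ρ/2, ∫_0^∞ exp(ε x²) · H_{r,ρ}(x) dx < ∞, i.e. a random variable with density H_{r,ρ} has a finite Gaussian exponential moment of order ε. -/

import Mathlib

noncomputable def psi (r : ℝ) : ℝ :=
  Real.sqrt (2 / Real.pi) * ∏' n : ℕ, (1 - r ^ (2 * n + 2)) / (1 - r ^ (2 * n + 1))

noncomputable def H (r ρ x : ℝ) : ℝ :=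
  (Real.sqrt (2 * ρ / Real.pi) / ∏' n : ℕ, (1 - r ^ (2 * n + 1))) *
    ∑' n : ℕ,
      (r ^ (-(2 * (n : ℤ))) / ∏ k ∈ Finset.Icc 1 n, (1 - r ^ (-(2 * (k : ℤ))))) *
        Real.exp (-ρ * r ^ (-(2 * (n : ℤ))) * x ^ 2 / 2)


open Finset Filter Real Topology

noncomputable def lamr (r : ℝ) (n : ℕ) : ℝ := r ^ (-(2 * (n : ℤ)))

noncomputable def dd (r : ℝ) (n : ℕ) : ℝ :=
  lamr r n / ∏ k ∈ Finset.Icc 1 n, (1 - lamr r k)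

noncomputable def PP (r : ℝ) (m : ℕ) : ℝ := ∏ j ∈ Finset.range m, (1 - r ^ (2*j+2))

lemma lamr_eq (r : ℝ) (hr0 : 0 < r) (n : ℕ) : lamr r n = (r ^ (2*n))⁻¹ := by
  rw [lamr, ← zpow_natCast r (2*n), ← zpow_neg]
  congr 1

lemma lamr_pos {r : ℝ} (hr0 : 0 < r) (n : ℕ) : 0 < lamr r n := by
  rw [lamr_eq r hr0]; positivity

lemma lamr_zero (r : ℝ) : lamr r 0 = 1 := by simp [lamr]

lemma one_lt_lamr {r : ℝ} (hr0 : 0 < r) (hr1 : r < 1) {k : ℕ} (hk : 1 ≤ k) :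
    1 < lamr r k := by
  rw [lamr_eq r hr0]
  rw [one_lt_inv_iff₀]
  constructor
  · positivity
  · exact pow_lt_one₀ hr0.le hr1 (by omega)

lemma one_le_lamr {r : ℝ} (hr0 : 0 < r) (hr1 : r < 1) (n : ℕ) : 1 ≤ lamr r n := by
  rcases Nat.eq_zero_or_pos n with h | h
  · simp [h, lamr_zero]
  · exact (one_lt_lamr hr0 hr1 h).le

lemma lamr_lt {r : ℝ} (hr0 : 0 < r) (hr1 : r < 1) {n m : ℕ} (h : n < m) :
    lamr r n < lamr r m := by
  rw [lamr_eq r hr0, lamr_eq r hr0]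
  apply inv_strictAnti₀
  · positivity
  · exact pow_lt_pow_right_of_lt_one₀ hr0 hr1 (by omega)

lemma prod_lam_ne {r : ℝ} (hr0 : 0 < r) (hr1 : r < 1) (n : ℕ) :
    ∏ k ∈ Finset.Icc 1 n, (1 - lamr r k) ≠ 0 := by
  apply Finset.prod_ne_zero_iff.2
  intro k hk
  have : 1 < lamr r k := one_lt_lamr hr0 hr1 (Finset.mem_Icc.1 hk).1
  linarith

lemma dd_zero (r : ℝ) : dd r 0 = 1 := by simp [dd, lamr_zero]

lemma PP_zero (r : ℝ) : PP r 0 = 1 := by simp [PP]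

lemma PP_succ (r : ℝ) (m : ℕ) : PP r (m+1) = PP r m * (1 - r ^ (2*m+2)) := by
  rw [PP, PP, Finset.prod_range_succ]

lemma PP_pos {r : ℝ} (hr0 : 0 < r) (hr1 : r < 1) (m : ℕ) : 0 < PP r m := by
  apply Finset.prod_pos
  intro j _
  have : r ^ (2*j+2) < 1 := pow_lt_one₀ hr0.le hr1 (by omega)
  linarith

lemma PP_le_one {r : ℝ} (hr0 : 0 < r) (hr1 : r < 1) (m : ℕ) : PP r m ≤ 1 := by
  apply Finset.prod_le_one
  · intro j _
    have : r ^ (2*j+2) < 1 := pow_lt_one₀ hr0.le hr1 (by omega)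
    linarith
  · intro j _
    have : 0 < r ^ (2*j+2) := by positivity
    linarith

lemma PP_antitone {r : ℝ} (hr0 : 0 < r) (hr1 : r < 1) : Antitone (PP r) := by
  apply antitone_nat_of_succ_le
  intro m
  rw [PP_succ]
  have h1 : 0 < PP r m := PP_pos hr0 hr1 m
  have h2 : 0 < r ^ (2*m+2) := by positivity
  nlinarith

lemma dd_rec {r : ℝ} (hr0 : 0 < r) (hr1 : r < 1) (n : ℕ) :
    dd r (n+1) * (1 - r ^ (2*n+2)) = -(r ^ (2*n)) * dd r n := by
  have hne := prod_lam_ne hr0 hr1 n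
  have hr : r ≠ 0 := hr0.ne'
  have hprod : ∏ k ∈ Finset.Icc 1 (n+1), (1 - lamr r k)
      = (∏ k ∈ Finset.Icc 1 n, (1 - lamr r k)) * (1 - lamr r (n+1)) := by
    rw [Finset.prod_Icc_succ_top (by omega)]
  have hlam1 : (1 : ℝ) - lamr r (n+1) ≠ 0 := by
    have := one_lt_lamr hr0 hr1 (Nat.le_add_left 1 n)
    intro h; linarith
  have hpow : r ^ (2*(n+1)) ≠ 0 := by positivity
  have hpown : r ^ (2*n) ≠ 0 := by positivity
  have key : lamr r (n+1) * (1 - r ^ (2*n+2)) = -(r ^ (2*n)) * lamr r n * (1 - lamr r (n+1)) := by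
    rw [lamr_eq r hr0, lamr_eq r hr0]
    field_simp
    ring
  rw [dd, dd, hprod, div_mul_eq_mul_div, key]
  field_simp

noncomputable def Cb (r : ℝ) (N n : ℕ) : ℝ :=
  if n ≤ N then PP r N / (PP r n * PP r (N - n)) else 0

noncomputable def UU (r : ℝ) (N : ℕ) : ℝ :=
  ∑ n ∈ Finset.range (N+1), (dd r n * PP r n) * Cb r N n

lemma Cb_zero {r : ℝ} (hr0 : 0 < r) (hr1 : r < 1) (N : ℕ) : Cb r N 0 = 1 := by
  rw [Cb, if_pos (Nat.zero_le N), PP_zero, Nat.sub_zero, one_mul,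
    div_self (PP_pos hr0 hr1 N).ne']

lemma Cb_self {r : ℝ} (hr0 : 0 < r) (hr1 : r < 1) (N : ℕ) : Cb r N N = 1 := by
  rw [Cb, if_pos (le_refl N), Nat.sub_self, PP_zero, mul_one,
    div_self (PP_pos hr0 hr1 N).ne']

lemma Cb_gt (r : ℝ) {N n : ℕ} (h : N < n) : Cb r N n = 0 := by
  simp [Cb, Nat.not_le.2 h]

lemma Pascal {r : ℝ} (hr0 : 0 < r) (hr1 : r < 1) (N k : ℕ) (hk : k ≤ N) :
    Cb r (N+1) (k+1) = Cb r N (k+1) + r ^ (2*(N-k)) * Cb r N k := by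
  rcases Nat.lt_or_ge k N with hlt | hge
  · -- k + 1 ≤ N
    obtain ⟨j, hj⟩ : ∃ j, N = k + 1 + j := ⟨N - (k+1), by omega⟩
    subst hj
    have h1 : k + 1 ≤ k + 1 + j + 1 := by omega
    have h2 : k + 1 ≤ k + 1 + j := by omega
    have h3 : k ≤ k + 1 + j := by omega
    rw [Cb, if_pos h1, Cb, if_pos h2, Cb, if_pos h3]
    have e1 : k + 1 + j + 1 - (k + 1) = j + 1 := by omega
    have e2 : k + 1 + j - (k + 1) = j := by omega
    have e3 : k + 1 + j - k = j + 1 := by omega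
    rw [e1, e2, e3]
    rw [PP_succ r (k+1+j), PP_succ r j, PP_succ r k]
    have hPk := (PP_pos hr0 hr1 k).ne'
    have hPj := (PP_pos hr0 hr1 j).ne'
    have hPN := (PP_pos hr0 hr1 (k+1+j)).ne'
    have hq1 : (1:ℝ) - r ^ (2*j+2) ≠ 0 := by
      have : r ^ (2*j+2) < 1 := pow_lt_one₀ hr0.le hr1 (by omega)
      intro h; linarith
    have hq2 : (1:ℝ) - r ^ (2*k+2) ≠ 0 := by
      have : r ^ (2*k+2) < 1 := pow_lt_one₀ hr0.le hr1 (by omega)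
      intro h; linarith
    have hkey : (1:ℝ) - r ^ (2*(k+1+j)+2) = (1 - r ^ (2*j+2)) + r ^ (2*j+2) * (1 - r ^ (2*k+2)) := by
      ring
    rw [hkey]
    field_simp
    ring
  · -- k = N
    have hkN : k = N := le_antisymm hk hge
    subst hkN
    rw [Cb_self hr0 hr1, Cb_gt r (by omega), Cb_self hr0 hr1]
    have : 2 * (k - k) = 0 := by omega
    rw [this]
    norm_num

lemma UU_one {r : ℝ} (hr0 : 0 < r) (hr1 : r < 1) : UU r 1 = 0 := by
  have hr2 : (1:ℝ) - r^2 ≠ 0 := by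
    have : r^2 < 1 := pow_lt_one₀ hr0.le hr1 (by omega)
    intro h; linarith
  have hrne : r ≠ 0 := hr0.ne'
  have hinv : (1:ℝ) - (r^2)⁻¹ ≠ 0 := by
    have h1 : (1:ℝ) < (r^2)⁻¹ := by
      rw [one_lt_inv_iff₀]
      exact ⟨by positivity, pow_lt_one₀ hr0.le hr1 (by omega)⟩
    intro h; linarith
  have hd1 : dd r 1 * PP r 1 = -1 := by
    rw [dd, PP]
    rw [Finset.Icc_self, Finset.prod_singleton, Finset.prod_range_one]
    rw [lamr_eq r hr0]
    norm_num
    have hne : (-1:ℝ) + r^2 ≠ 0 := by intro h; apply hr2; linarith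
    field_simp
    rw [div_eq_iff (by intro h; apply hr2; linarith : r^2 - 1 ≠ 0)]
    ring
  rw [UU]
  rw [Finset.sum_range_succ, Finset.sum_range_one]
  rw [hd1, Cb_self hr0 hr1, Cb_zero hr0 hr1, dd_zero, PP_zero]
  norm_num

lemma UU_succ {r : ℝ} (hr0 : 0 < r) (hr1 : r < 1) (N : ℕ) (hN : 1 ≤ N) :
    UU r (N+1) = (1 - r ^ (2*N)) * UU r N := by
  have ha : ∀ i, dd r (i+1) * PP r (i+1) = -(r ^ (2*i)) * (dd r i * PP r i) := by
    intro i
    rw [PP_succ]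
    rw [show dd r (i+1) * (PP r i * (1 - r ^ (2*i+2)))
        = (dd r (i+1) * (1 - r ^ (2*i+2))) * PP r i from by ring,
      dd_rec hr0 hr1 i]
    ring
  rw [UU, Finset.sum_range_succ' _ (N+1)]
  have hsum : ∀ i ∈ Finset.range (N+1),
      dd r (i+1) * PP r (i+1) * Cb r (N+1) (i+1)
      = dd r (i+1) * PP r (i+1) * Cb r N (i+1)
        + (-(r ^ (2*N))) * (dd r i * PP r i * Cb r N i) := by
    intro i hi
    have hiN : i ≤ N := by
      have := Finset.mem_range.1 hi
      omega
    rw [Pascal hr0 hr1 N i hiN, ha i]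
    have hpow : r ^ (2*i) * r ^ (2*(N-i)) = r ^ (2*N) := by
      rw [← pow_add]
      congr 1
      omega
    linear_combination (-(dd r i * PP r i * Cb r N i)) * hpow
  rw [Finset.sum_congr rfl hsum, Finset.sum_add_distrib, ← Finset.mul_sum]
  have hU : UU r N = ∑ i ∈ Finset.range (N+1), dd r i * PP r i * Cb r N i := rfl
  have hshift : ∑ i ∈ Finset.range (N+1), dd r (i+1) * PP r (i+1) * Cb r N (i+1)
      = UU r N - dd r 0 * PP r 0 * Cb r N 0 + dd r (N+1) * PP r (N+1) * Cb r N (N+1) := by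
    rw [hU]
    rw [Finset.sum_range_succ' (fun n => dd r n * PP r n * Cb r N n) N]
    have : ∑ i ∈ Finset.range (N+1), dd r (i+1) * PP r (i+1) * Cb r N (i+1)
        = ∑ i ∈ Finset.range N, dd r (i+1) * PP r (i+1) * Cb r N (i+1)
          + dd r (N+1) * PP r (N+1) * Cb r N (N+1) := Finset.sum_range_succ _ N
    rw [this]
    ring
  rw [hshift, Cb_gt r (by omega : N < N+1)]
  rw [dd_zero, PP_zero, Cb_zero hr0 hr1, Cb_zero hr0 hr1]
  rw [hU]
  ring

lemma UU_eq_zero {r : ℝ} (hr0 : 0 < r) (hr1 : r < 1) (N : ℕ) (hN : 1 ≤ N) :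
    UU r N = 0 := by
  induction N with
  | zero => omega
  | succ n ih =>
    rcases Nat.lt_or_ge n 1 with h | h
    · have : n = 0 := by omega
      subst this
      exact UU_one hr0 hr1
    · rw [UU_succ hr0 hr1 n h, ih h, mul_zero]

lemma key_identity {r : ℝ} (hr0 : 0 < r) (hr1 : r < 1) (N : ℕ) (hN : 1 ≤ N) :
    ∑ n ∈ Finset.range (N+1), dd r n / PP r (N-n) = 0 := by
  have hPN := (PP_pos hr0 hr1 N).ne'
  have h : UU r N = PP r N * ∑ n ∈ Finset.range (N+1), dd r n / PP r (N-n) := by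
    rw [UU, Finset.mul_sum]
    apply Finset.sum_congr rfl
    intro n hn
    have hnN : n ≤ N := by
      have := Finset.mem_range.1 hn; omega
    rw [Cb, if_pos hnN]
    have hPn := (PP_pos hr0 hr1 n).ne'
    have hPNn := (PP_pos hr0 hr1 (N-n)).ne'
    field_simp
  have h0 := UU_eq_zero hr0 hr1 N hN
  rw [h] at h0
  rcases mul_eq_zero.1 h0 with h' | h'
  · exact absurd h' hPN
  · exact h'

lemma integral_exp_mul' (a y : ℝ) (ha : a ≠ 0) :
    ∫ s in (0:ℝ)..y, Real.exp (a * s) = (Real.exp (a * y) - 1) / a := by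
  have h := intervalIntegral.integral_comp_mul_left (a := (0:ℝ)) (b := y) Real.exp (c := a) ha
  rw [h, integral_exp]
  rw [mul_zero, Real.exp_zero, smul_eq_mul]
  field_simp

noncomputable def ff (r : ℝ) : ℕ → ℝ → ℝ
  | 0 => fun y => Real.exp (-y)
  | (N+1) => fun y => lamr r (N+1) * Real.exp (-(lamr r (N+1)) * y) *
      ∫ s in (0:ℝ)..y, Real.exp (lamr r (N+1) * s) * ff r N s

lemma ff_cont (r : ℝ) (N : ℕ) : Continuous (ff r N) := by
  induction N with
  | zero =>
    show Continuous fun y => Real.exp (-y)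
    exact Real.continuous_exp.comp continuous_neg
  | succ n ih =>
    show Continuous fun y => lamr r (n+1) * Real.exp (-(lamr r (n+1)) * y) *
      ∫ s in (0:ℝ)..y, Real.exp (lamr r (n+1) * s) * ff r n s
    have hg : Continuous fun s => Real.exp (lamr r (n+1) * s) * ff r n s :=
      (Real.continuous_exp.comp (continuous_const.mul continuous_id)).mul ih
    have hint : Continuous fun y => ∫ s in (0:ℝ)..y, Real.exp (lamr r (n+1) * s) * ff r n s :=
      intervalIntegral.continuous_primitive (fun a b => (hg.intervalIntegrable a b)) 0
    exact (continuous_const.mul (Real.continuous_exp.comp (continuous_const.mul continuous_id))).mul hint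

lemma ff_nonneg {r : ℝ} (hr0 : 0 < r) (N : ℕ) {y : ℝ} (hy : 0 ≤ y) : 0 ≤ ff r N y := by
  induction N generalizing y with
  | zero => exact (Real.exp_pos _).le
  | succ n ih =>
    show 0 ≤ lamr r (n+1) * Real.exp (-(lamr r (n+1)) * y) *
      ∫ s in (0:ℝ)..y, Real.exp (lamr r (n+1) * s) * ff r n s
    apply mul_nonneg (mul_nonneg (lamr_pos hr0 (n+1)).le (Real.exp_pos _).le)
    apply intervalIntegral.integral_nonneg hy
    intro u hu
    exact mul_nonneg (Real.exp_pos _).le (ih hu.1)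

lemma lam_split {r : ℝ} (hr0 : 0 < r) (hr1 : r < 1) {n N : ℕ} (hn : n ≤ N) :
    lamr r n = lamr r (N+1) * r ^ (2*(N+1-n)) := by
  have hpow : r^(2*(N+1)) = r^(2*n) * r^(2*(N+1-n)) := by
    rw [← pow_add]; congr 1; omega
  rw [lamr_eq r hr0, lamr_eq r hr0, hpow, mul_inv, mul_assoc,
    inv_mul_cancel₀ (pow_ne_zero _ hr0.ne'), mul_one]

lemma ratio_lemma {r : ℝ} (hr0 : 0 < r) (hr1 : r < 1) {n N : ℕ} (hn : n ≤ N) :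
    lamr r (N+1) * (dd r n / PP r (N-n)) / (lamr r (N+1) - lamr r n)
      = dd r n / PP r (N+1-n) := by
  have hP : PP r (N+1-n) = PP r (N-n) * (1 - r^(2*(N+1-n))) := by
    have h1 : N+1-n = (N-n)+1 := by omega
    rw [h1, PP_succ]
    have h2 : 2*(N-n)+2 = 2*((N-n)+1) := by omega
    rw [h2]
  have hq : r ^ (2*(N+1-n)) < 1 := pow_lt_one₀ hr0.le hr1 (by omega)
  have hqne : (1:ℝ) - r ^ (2*(N+1-n)) ≠ 0 := by intro h; linarith
  have hLne : lamr r (N+1) ≠ 0 := (lamr_pos hr0 _).ne'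
  have hPne : PP r (N-n) ≠ 0 := (PP_pos hr0 hr1 _).ne'
  have hsubne : lamr r (N+1) - lamr r (N+1) * r ^ (2*(N+1-n)) ≠ 0 := by
    have h3 : lamr r (N+1) - lamr r (N+1) * r ^ (2*(N+1-n))
        = lamr r (N+1) * (1 - r ^ (2*(N+1-n))) := by ring
    rw [h3]
    exact mul_ne_zero hLne hqne
  rw [hP, lam_split hr0 hr1 hn, div_eq_div_iff hsubne (mul_ne_zero hPne hqne)]
  field_simp

lemma ff_formula {r : ℝ} (hr0 : 0 < r) (hr1 : r < 1) (N : ℕ) (y : ℝ) :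
    ff r N y = ∑ n ∈ Finset.range (N+1),
      dd r n / PP r (N-n) * Real.exp (-(lamr r n) * y) := by
  induction N generalizing y with
  | zero =>
    rw [Finset.sum_range_one, dd_zero, PP_zero, lamr_zero]
    show Real.exp (-y) = 1 / 1 * Real.exp (-1 * y)
    norm_num
  | succ N ih =>
    have hL := lamr_pos hr0 (N+1)
    set L := lamr r (N+1) with hLdef
    show L * Real.exp (-L * y) * (∫ s in (0:ℝ)..y, Real.exp (L * s) * ff r N s) = _
    have hint : (∫ s in (0:ℝ)..y, Real.exp (L * s) * ff r N s)
        = ∑ n ∈ Finset.range (N+1), dd r n / PP r (N-n)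
            * ((Real.exp ((L - lamr r n) * y) - 1) / (L - lamr r n)) := by
      rw [intervalIntegral.integral_congr
        (g := fun s => ∑ n ∈ Finset.range (N+1),
          dd r n / PP r (N-n) * Real.exp ((L - lamr r n) * s))
        (by
          intro s _
          dsimp only
          rw [ih s, Finset.mul_sum]
          apply Finset.sum_congr rfl
          intro n _
          rw [mul_comm (Real.exp (L*s)), mul_assoc, ← Real.exp_add]
          have harg : -lamr r n * s + L * s = (L - lamr r n) * s := by ring
          rw [harg])]
      rw [intervalIntegral.integral_finset_sum]
      · apply Finset.sum_congr rfl
        intro n hn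
        have hlt : lamr r n < L := lamr_lt hr0 hr1 (by
          have := Finset.mem_range.1 hn; omega)
        have hane : L - lamr r n ≠ 0 := by intro h; linarith
        rw [intervalIntegral.integral_const_mul, integral_exp_mul' _ _ hane]
      · intro n _
        apply Continuous.intervalIntegrable
        exact continuous_const.mul (Real.continuous_exp.comp (continuous_const.mul continuous_id))
    rw [hint, Finset.mul_sum]
    have hterm : ∀ n ∈ Finset.range (N+1),
        L * Real.exp (-L * y) * (dd r n / PP r (N-n)
          * ((Real.exp ((L - lamr r n) * y) - 1) / (L - lamr r n)))
        = dd r n / PP r (N+1-n) * Real.exp (-(lamr r n) * y)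
          - dd r n / PP r (N+1-n) * Real.exp (-L * y) := by
      intro n hn
      have hnN : n ≤ N := by have := Finset.mem_range.1 hn; omega
      have hlt : lamr r n < L := lamr_lt hr0 hr1 (by omega)
      have hane : L - lamr r n ≠ 0 := by intro h; linarith
      have hexp : Real.exp (-L * y) * Real.exp ((L - lamr r n) * y)
          = Real.exp (-(lamr r n) * y) := by
        rw [← Real.exp_add]; ring_nf
      rw [← ratio_lemma hr0 hr1 hnN]
      simp only [neg_mul] at hexp ⊢
      linear_combination (L * (dd r n / PP r (N-n)) / (L - lamr r n)) * hexp
    rw [Finset.sum_congr rfl hterm, Finset.sum_sub_distrib, ← Finset.sum_mul]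
    have hNN : N+1-(N+1) = 0 := by omega
    have hsum : ∑ n ∈ Finset.range (N+1), dd r n / PP r (N+1-n) = -(dd r (N+1)) := by
      have h0 := key_identity hr0 hr1 (N+1) (by omega)
      rw [Finset.sum_range_succ] at h0
      rw [hNN, PP_zero, div_one] at h0
      linarith
    rw [hsum]
    conv_rhs => rw [Finset.sum_range_succ]
    rw [hNN, PP_zero, div_one, ← hLdef]
    ring

lemma one_sub_ge_exp {t M : ℝ} (h0 : 0 ≤ t) (htM : t ≤ M) (hM : M < 1) :
    Real.exp (-t / (1-M)) ≤ 1 - t := by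
  have h1M : 0 < 1 - M := by linarith
  have h1t : 0 < 1 - t := by linarith
  rw [← Real.le_log_iff_exp_le h1t]
  have hlog : Real.log (1-t)⁻¹ ≤ (1-t)⁻¹ - 1 := Real.log_le_sub_one_of_pos (by positivity)
  rw [Real.log_inv] at hlog
  have h2 : (1-t)⁻¹ - 1 = t / (1-t) := by field_simp; ring
  rw [h2] at hlog
  have h3 : t / (1-t) ≤ t / (1-M) := div_le_div_of_nonneg_left h0 h1M (by linarith)
  rw [neg_div]
  linarith

lemma prod_one_sub_ge {g : ℕ → ℝ} {M : ℝ} (hM : M < 1)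
    (h0 : ∀ n, 0 ≤ g n) (hle : ∀ n, g n ≤ M) (hs : Summable g) (A : Finset ℕ) :
    Real.exp (-(∑' n, g n) / (1-M)) ≤ ∏ n ∈ A, (1 - g n) := by
  have h1M : 0 < 1 - M := by linarith
  have step1 : ∏ n ∈ A, Real.exp (-(g n) / (1-M)) ≤ ∏ n ∈ A, (1 - g n) := by
    apply Finset.prod_le_prod
    · intro i _; exact (Real.exp_pos _).le
    · intro i _; exact one_sub_ge_exp (h0 i) (hle i) hM
  refine le_trans ?_ step1
  rw [← Real.exp_sum]
  apply Real.exp_le_exp.2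
  rw [← Finset.sum_div, Finset.sum_neg_distrib]
  have h4 : ∑ n ∈ A, g n ≤ ∑' n, g n := Summable.sum_le_tsum A (fun i _ => (h0 i)) hs
  rw [div_eq_mul_inv, div_eq_mul_inv]
  exact mul_le_mul_of_nonneg_right (neg_le_neg h4) (by positivity)

lemma summable_pow_even {r : ℝ} (hr0 : 0 < r) (hr1 : r < 1) :
    Summable (fun n : ℕ => r ^ (2*n+2)) := by
  have h1 : Summable (fun n : ℕ => (r^2)^n * r^2) :=
    (summable_geometric_of_lt_one (by positivity) (by nlinarith)).mul_right _
  exact h1.congr (fun n => by rw [← pow_mul, ← pow_add])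

lemma summable_pow_odd {r : ℝ} (hr0 : 0 < r) (hr1 : r < 1) :
    Summable (fun n : ℕ => r ^ (2*n+1)) := by
  have h1 : Summable (fun n : ℕ => (r^2)^n * r) :=
    (summable_geometric_of_lt_one (by positivity) (by nlinarith)).mul_right _
  exact h1.congr (fun n => by rw [← pow_mul, ← pow_succ])

lemma PP_lower {r : ℝ} (hr0 : 0 < r) (hr1 : r < 1) (m : ℕ) :
    Real.exp (-(∑' n : ℕ, r ^ (2*n+2)) / (1-r^2)) ≤ PP r m := by
  rw [PP]
  apply prod_one_sub_ge (by nlinarith : r^2 < 1)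
    (fun n => by positivity)
    (fun n => by
      calc r ^ (2*n+2) = r^(2*n) * r^2 := by rw [pow_add]
      _ ≤ 1 * r^2 := by
          apply mul_le_mul_of_nonneg_right _ (by positivity)
          exact pow_le_one₀ hr0.le hr1.le
      _ = r^2 := one_mul _)
    (summable_pow_even hr0 hr1)

lemma dd_abs_summable {r : ℝ} (hr0 : 0 < r) (hr1 : r < 1) :
    Summable (fun n => |dd r n|) := by
  apply summable_of_ratio_norm_eventually_le (r := 1/2) (by norm_num)
  have h1 : ∀ᶠ n : ℕ in atTop, r ^ (2*n) ≤ (1 - r^2)/2 := by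
    have ht : Tendsto (fun n : ℕ => (r^2)^n) atTop (𝓝 0) :=
      tendsto_pow_atTop_nhds_zero_of_lt_one (by positivity) (by nlinarith)
    have hev := ht.eventually (eventually_le_nhds (by nlinarith : (0:ℝ) < (1-r^2)/2))
    filter_upwards [hev] with n hn
    rw [pow_mul] at *
    exact hn
  filter_upwards [h1] with n hn
  have hq1 : (0:ℝ) < 1 - r^(2*n+2) := by
    have : r^(2*n+2) < 1 := pow_lt_one₀ hr0.le hr1 (by omega)
    linarith
  have hq2 : 1 - r^2 ≤ 1 - r^(2*n+2) := by
    have : r^(2*n+2) ≤ r^2 := by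
      calc r ^ (2*n+2) = r^(2*n) * r^2 := by rw [pow_add]
      _ ≤ 1 * r^2 := mul_le_mul_of_nonneg_right (pow_le_one₀ hr0.le hr1.le) (by positivity)
      _ = r^2 := one_mul _
    linarith
  have hrec := dd_rec hr0 hr1 n
  have habs : |dd r (n+1)| * (1 - r^(2*n+2)) = r^(2*n) * |dd r n| := by
    have := congrArg abs hrec
    rw [abs_mul, abs_mul, abs_of_pos hq1, abs_neg, abs_of_nonneg (by positivity : (0:ℝ) ≤ r^(2*n))] at this
    linarith [this]
  have hddnn : 0 ≤ |dd r n| := abs_nonneg _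
  rw [Real.norm_eq_abs, Real.norm_eq_abs, abs_abs, abs_abs]
  have key : |dd r (n+1)| * (1 - r^(2*n+2)) ≤ (1/2 * |dd r n|) * (1 - r^(2*n+2)) := by
    calc |dd r (n+1)| * (1 - r^(2*n+2)) = r^(2*n) * |dd r n| := habs
    _ ≤ (1-r^2)/2 * |dd r n| := mul_le_mul_of_nonneg_right hn hddnn
    _ ≤ (1-r^(2*n+2))/2 * |dd r n| :=
        mul_le_mul_of_nonneg_right (by linarith) hddnn
    _ = (1/2 * |dd r n|) * (1 - r^(2*n+2)) := by ring
  exact le_of_mul_le_mul_right key hq1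

lemma PP_tendsto {r : ℝ} (hr0 : 0 < r) (hr1 : r < 1) :
    ∃ L : ℝ, 0 < L ∧ Tendsto (PP r) atTop (𝓝 L) := by
  have hanti : Antitone (PP r) := PP_antitone hr0 hr1
  have hbdd : BddBelow (Set.range (PP r)) := by
    refine ⟨Real.exp (-(∑' n : ℕ, r ^ (2*n+2)) / (1-r^2)), ?_⟩
    rintro x ⟨m, rfl⟩
    exact PP_lower hr0 hr1 m
  refine ⟨⨅ m, PP r m, ?_, tendsto_atTop_ciInf hanti hbdd⟩
  have hc : Real.exp (-(∑' n : ℕ, r ^ (2*n+2)) / (1-r^2)) ≤ ⨅ m, PP r m :=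
    le_ciInf (fun m => PP_lower hr0 hr1 m)
  exact lt_of_lt_of_le (Real.exp_pos _) hc

lemma Sy_nonneg {r : ℝ} (hr0 : 0 < r) (hr1 : r < 1) {y : ℝ} (hy : 0 ≤ y) :
    0 ≤ ∑' n, dd r n * Real.exp (-(lamr r n) * y) := by
  obtain ⟨L, hL, hlim⟩ := PP_tendsto hr0 hr1
  set F : ℕ → ℕ → ℝ := fun N n =>
    if n ≤ N then dd r n * (PP r N / PP r (N-n)) * Real.exp (-(lamr r n) * y) else 0 with hF
  have hexple : ∀ n, Real.exp (-(lamr r n) * y) ≤ 1 := fun n =>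
    Real.exp_le_one_iff.2 (by nlinarith [mul_nonneg (lamr_pos hr0 n).le hy])
  have hbound : ∀ N : ℕ, ∀ n : ℕ, ‖F N n‖ ≤ |dd r n| := by
    intro N n
    simp only [hF]
    split_ifs with h
    · have h1 : 0 < PP r (N-n) := PP_pos hr0 hr1 _
      have h3 : 0 ≤ PP r N / PP r (N-n) := div_nonneg (PP_pos hr0 hr1 N).le h1.le
      have h4 : PP r N / PP r (N-n) ≤ 1 :=
        (div_le_one h1).2 (PP_antitone hr0 hr1 (Nat.sub_le N n))
      have h5 := Real.exp_pos (-(lamr r n) * y)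
      rw [Real.norm_eq_abs, abs_mul, abs_mul, abs_of_nonneg h3, abs_of_pos h5]
      have h6 : (PP r N / PP r (N-n)) * Real.exp (-(lamr r n) * y) ≤ 1 :=
        by simpa using mul_le_mul h4 (hexple n) h5.le zero_le_one
      nlinarith [abs_nonneg (dd r n), mul_le_mul_of_nonneg_left h6 (abs_nonneg (dd r n))]
    · simp [abs_nonneg]
  have hpt : ∀ n : ℕ, Tendsto (fun N => F N n) atTop
      (𝓝 (dd r n * Real.exp (-(lamr r n) * y))) := by
    intro n
    have h2 : Tendsto (fun N => PP r (N - n)) atTop (𝓝 L) :=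
      hlim.comp (tendsto_sub_atTop_nat n)
    have h3 : Tendsto (fun N => PP r N / PP r (N-n)) atTop (𝓝 1) := by
      have := hlim.div h2 hL.ne'
      rwa [div_self hL.ne'] at this
    have h4 : Tendsto (fun N => dd r n * (PP r N / PP r (N-n)) * Real.exp (-(lamr r n)*y))
        atTop (𝓝 (dd r n * 1 * Real.exp (-(lamr r n)*y))) :=
      (tendsto_const_nhds.mul h3).mul tendsto_const_nhds
    rw [mul_one] at h4
    apply Tendsto.congr' _ h4
    filter_upwards [eventually_ge_atTop n] with N hN
    simp only [hF]
    rw [if_pos hN]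
  have hmain := tendsto_tsum_of_dominated_convergence (dd_abs_summable hr0 hr1) hpt
    (Filter.Eventually.of_forall hbound)
  have hid : ∀ N : ℕ, (∑' n, F N n) = PP r N * ff r N y := by
    intro N
    rw [tsum_eq_sum (s := Finset.range (N+1)) (f := fun n => F N n) ?hout]
    case hout =>
      intro b hb
      simp only [hF]
      rw [if_neg (fun h => hb (Finset.mem_range.2 (by omega)))]
    rw [ff_formula hr0 hr1 N y, Finset.mul_sum]
    apply Finset.sum_congr rfl
    intro n hn
    have hn' : n ≤ N := by have := Finset.mem_range.1 hn; omega
    simp only [hF]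
    rw [if_pos hn']
    ring
  have hmain' : Tendsto (fun N => PP r N * ff r N y) atTop
      (𝓝 (∑' n, dd r n * Real.exp (-(lamr r n) * y))) := by
    apply hmain.congr hid
  exact ge_of_tendsto' hmain'
    (fun N => mul_nonneg (PP_pos hr0 hr1 N).le (ff_nonneg hr0 N hy))

lemma Q_pos {r : ℝ} (hr0 : 0 < r) (hr1 : r < 1) :
    0 < ∏' n : ℕ, (1 - r ^ (2*n+1)) := by
  have hcle : ∀ A : Finset ℕ,
      Real.exp (-(∑' n : ℕ, r ^ (2*n+1)) / (1-r)) ≤ ∏ n ∈ A, (1 - r ^ (2*n+1)) := by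
    intro A
    apply prod_one_sub_ge hr1 (fun n => by positivity)
      (fun n => by
        calc r^(2*n+1) = r^(2*n) * r := by rw [pow_succ]
        _ ≤ 1 * r := mul_le_mul_of_nonneg_right (pow_le_one₀ hr0.le hr1.le) hr0.le
        _ = r := one_mul r)
      (summable_pow_odd hr0 hr1)
  by_cases h : Multipliable (fun n : ℕ => 1 - r ^ (2*n+1))
  · have hp : Tendsto (fun s : Finset ℕ => ∏ n ∈ s, (1 - r ^ (2*n+1))) atTop
        (𝓝 (∏' n : ℕ, (1 - r ^ (2*n+1)))) := h.hasProd
    exact lt_of_lt_of_le (Real.exp_pos _) (ge_of_tendsto' hp hcle)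
  · rw [tprod_eq_one_of_not_multipliable h]; norm_num


lemma H_eq (r ρ x : ℝ) : H r ρ x =
    (Real.sqrt (2 * ρ / Real.pi) / ∏' n : ℕ, (1 - r ^ (2 * n + 1))) *
      ∑' n : ℕ, dd r n * Real.exp (-ρ * lamr r n * x ^ 2 / 2) := rfl


theorem stmt6 (r ρ : ℝ) (hr0 : 0 < r) (hr1 : r < 1) (hρ : 0 < ρ) :
    (∃ C : ℝ, 0 ≤ C ∧ ∀ x : ℝ, 0 ≤ x →
      0 ≤ H r ρ x ∧ H r ρ x ≤ C * Real.exp (-ρ * x ^ 2 / 2)) ∧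
    ∀ ε : ℝ, 0 < ε → ε < ρ / 2 →
      MeasureTheory.IntegrableOn (fun x => Real.exp (ε * x ^ 2) * H r ρ x)
        (Set.Ioi (0 : ℝ)) := by
  have hQ := Q_pos hr0 hr1
  set pref := Real.sqrt (2 * ρ / Real.pi) / ∏' n : ℕ, (1 - r ^ (2 * n + 1)) with hpref
  have hprefnn : 0 ≤ pref := div_nonneg (Real.sqrt_nonneg _) hQ.le
  have hDs := dd_abs_summable hr0 hr1
  set D := ∑' n, |dd r n| with hD
  have hDnn : 0 ≤ D := tsum_nonneg (fun n => abs_nonneg _)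
  have hexparg : ∀ (n : ℕ) (x : ℝ), -ρ * lamr r n * x^2/2 ≤ 0 := fun n x => by
    nlinarith [mul_nonneg (lamr_pos hr0 n).le (sq_nonneg x)]
  have hterm_le : ∀ (n : ℕ) (x : ℝ),
      ‖dd r n * Real.exp (-ρ * lamr r n * x^2/2)‖ ≤ |dd r n| := by
    intro n x
    rw [Real.norm_eq_abs, abs_mul, abs_of_pos (Real.exp_pos _)]
    nlinarith [abs_nonneg (dd r n), Real.exp_le_one_iff.2 (hexparg n x),
      Real.exp_pos (-ρ * lamr r n * x^2/2)]
  have hnorm_sum : ∀ x : ℝ,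
      Summable (fun n => ‖dd r n * Real.exp (-ρ * lamr r n * x^2/2)‖) := fun x =>
    hDs.of_nonneg_of_le (fun n => norm_nonneg _) (fun n => hterm_le n x)
  have hsummand : ∀ x : ℝ,
      Summable (fun n => dd r n * Real.exp (-ρ * lamr r n * x^2/2)) := fun x =>
    (hnorm_sum x).of_norm
  have hT_nonneg : ∀ x : ℝ, 0 ≤ x →
      0 ≤ ∑' n, dd r n * Real.exp (-ρ * lamr r n * x^2/2) := by
    intro x _
    have hco : ∀ n : ℕ, dd r n * Real.exp (-ρ * lamr r n * x^2/2)
        = dd r n * Real.exp (-(lamr r n) * (ρ*x^2/2)) := fun n => by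
      rw [show -ρ * lamr r n * x^2/2 = -(lamr r n) * (ρ*x^2/2) from by ring]
    rw [tsum_congr hco]
    exact Sy_nonneg hr0 hr1 (by positivity)
  have hT_bound : ∀ x : ℝ, 0 ≤ x →
      (∑' n, dd r n * Real.exp (-ρ * lamr r n * x^2/2)) ≤ D * Real.exp (-ρ*x^2/2) := by
    intro x hx
    calc (∑' n, dd r n * Real.exp (-ρ * lamr r n * x^2/2))
        ≤ |∑' n, dd r n * Real.exp (-ρ * lamr r n * x^2/2)| := le_abs_self _
      _ = ‖∑' n, dd r n * Real.exp (-ρ * lamr r n * x^2/2)‖ := (Real.norm_eq_abs _).symm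
      _ ≤ ∑' n, ‖dd r n * Real.exp (-ρ * lamr r n * x^2/2)‖ :=
          norm_tsum_le_tsum_norm (hnorm_sum x)
      _ ≤ ∑' n, |dd r n| * Real.exp (-ρ*x^2/2) := by
          apply Summable.tsum_le_tsum _ (hnorm_sum x) (hDs.mul_right _)
          intro n
          rw [Real.norm_eq_abs, abs_mul, abs_of_pos (Real.exp_pos _)]
          apply mul_le_mul_of_nonneg_left _ (abs_nonneg _)
          apply Real.exp_le_exp.2
          nlinarith [one_le_lamr hr0 hr1 n, sq_nonneg x,
            mul_nonneg (mul_nonneg hρ.le (sq_nonneg x)) (sub_nonneg.2 (one_le_lamr hr0 hr1 n))]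
      _ = D * Real.exp (-ρ*x^2/2) := tsum_mul_right
  have hbound : ∀ x : ℝ, 0 ≤ x →
      0 ≤ H r ρ x ∧ H r ρ x ≤ (pref * D) * Real.exp (-ρ * x^2/2) := by
    intro x hx
    rw [H_eq, ← hpref]
    constructor
    · exact mul_nonneg hprefnn (hT_nonneg x hx)
    · calc pref * ∑' n, dd r n * Real.exp (-ρ * lamr r n * x^2/2)
          ≤ pref * (D * Real.exp (-ρ*x^2/2)) :=
            mul_le_mul_of_nonneg_left (hT_bound x hx) hprefnn
        _ = (pref * D) * Real.exp (-ρ * x^2/2) := by ring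
  constructor
  · exact ⟨pref * D, mul_nonneg hprefnn hDnn, hbound⟩
  · intro ε hε hε2
    have hHcont : Continuous (fun x => H r ρ x) := by
      have heq : (fun x => H r ρ x)
          = fun x => pref * ∑' n, dd r n * Real.exp (-ρ * lamr r n * x^2/2) :=
        funext (fun x => by rw [H_eq, ← hpref])
      rw [heq]
      apply continuous_const.mul
      apply continuous_tsum (u := fun n => |dd r n|) ?_ hDs ?_
      · intro n
        exact continuous_const.mul (Real.continuous_exp.comp
          ((continuous_const.mul (continuous_pow 2)).div_const 2))
      · intro n x
        exact hterm_le n x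
    have hb : 0 < ρ/2 - ε := by linarith
    have hmaj : MeasureTheory.IntegrableOn
        (fun x => (pref*D) * Real.exp (-(ρ/2-ε) * x^2)) (Set.Ioi (0:ℝ)) :=
      ((integrable_exp_neg_mul_sq hb).const_mul _).integrableOn
    apply MeasureTheory.Integrable.mono' hmaj
    · exact ((Real.continuous_exp.comp (continuous_const.mul (continuous_pow 2))).mul hHcont).aestronglyMeasurable.restrict
    · rw [MeasureTheory.ae_restrict_iff' measurableSet_Ioi]
      apply MeasureTheory.ae_of_all
      intro x hx
      have hx0 : (0:ℝ) ≤ x := le_of_lt hx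
      have hHnn := (hbound x hx0).1
      have hHle := (hbound x hx0).2
      rw [Real.norm_eq_abs, abs_of_nonneg (mul_nonneg (Real.exp_pos _).le hHnn)]
      calc Real.exp (ε * x^2) * H r ρ x
          ≤ Real.exp (ε * x^2) * ((pref * D) * Real.exp (-ρ * x^2/2)) :=
            mul_le_mul_of_nonneg_left hHle (Real.exp_pos _).le
        _ = (pref * D) * (Real.exp (ε * x^2) * Real.exp (-ρ * x^2/2)) := by ring
        _ = (pref * D) * Real.exp (-(ρ/2-ε) * x^2) := by
            rw [← Real.exp_add]
            congr 1
            ring
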